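/- Let x > 0, β > 0, v ∈ ℝ^N with y = x + βv > 0 componentwise, and set z = P(y). Let ρ > 0, let w ∈ ℝ^N be nonnegative, put S^- = {j : v_j < 0}, S^+ = {j : v_j > 0}, B^- = max{ρ + ∑_{j ∈ S^-} z_j, ∑_{j ∈ S^-} w_j} and B^+ = min{∑_{j ∈ S^+} z_j, ∑_{j ∈ S^+} w_j} (with max_{j ∈ S^-}(−v_j/y_j) and min_{j ∈ S^+}(v_j/y_j) interpreted as 0 when the corresponding set is empty). If the decreasing condition β · max_{j ∈ S^-}(−v_j/y_j) · B^- − β · min_{j ∈ S^+}(v_j/y_j) · B^+ + β ∑_{j=1}^N v_j < I_A^b(y) − I_A^b(z) holds, then I_A^b(z) ≤ I_A^b(x). -/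

import Mathlib

open Finset Filter Topology

noncomputable def dd {M N : ℕ} (A : Fin M → Fin N → ℝ) (x : Fin N → ℝ) (i : Fin M) : ℝ :=
  ∑ j, A i j * x j

noncomputable def ff {M N : ℕ} (A : Fin M → Fin N → ℝ) (b : Fin M → ℝ) (x : Fin N → ℝ) (j : Fin N) : ℝ :=
  ∑ i, A i j * b i / dd A x i

noncomputable def EMop {M N : ℕ} (A : Fin M → Fin N → ℝ) (b : Fin M → ℝ) (x : Fin N → ℝ) : Fin N → ℝ :=
  fun j => x j * ff A b x j

noncomputable def KL {N : ℕ} (u v : Fin N → ℝ) : ℝ :=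
  (∑ j, u j * Real.log (u j / v j)) - ∑ j, (u j - v j)

noncomputable def IAb {M N : ℕ} (A : Fin M → Fin N → ℝ) (b : Fin M → ℝ) (x : Fin N → ℝ) : ℝ :=
  (∑ i, b i * Real.log (b i / dd A x i)) - ∑ i, (b i - dd A x i)

noncomputable def finSup0 {ι : Type*} (s : Finset ι) (g : ι → ℝ) : ℝ :=
  if h : s.Nonempty then s.sup' h g else 0

noncomputable def finInf0 {ι : Type*} (s : Finset ι) (g : ι → ℝ) : ℝ :=
  if h : s.Nonempty then s.inf' h g else 0

theorem stmt_6
    (M N : ℕ) (hM : 0 < M) (hN : 0 < N)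
    (A : Fin M → Fin N → ℝ) (b : Fin M → ℝ)
    (hA : ∀ i j, 0 ≤ A i j)
    (hcol : ∀ j, ∑ i, A i j = 1)
    (hrow : ∀ i, ∃ j, 0 < A i j)
    (hb : ∀ i, 0 < b i)
    (x v : Fin N → ℝ) (β : ℝ)
    (hx : ∀ j, 0 < x j) (hβ : 0 < β)
    (y : Fin N → ℝ) (hy : y = fun j => x j + β * v j)
    (hypos : ∀ j, 0 < y j)
    (z : Fin N → ℝ) (hz : z = EMop A b y)
    (ρ : ℝ) (hρ : 0 < ρ)
    (w : Fin N → ℝ) (hw : ∀ j, 0 ≤ w j)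
    (Sm Sp : Finset (Fin N))
    (hSm : Sm = Finset.univ.filter (fun j => v j < 0))
    (hSp : Sp = Finset.univ.filter (fun j => 0 < v j))
    (Bm Bp : ℝ)
    (hBm : Bm = max (ρ + ∑ j ∈ Sm, z j) (∑ j ∈ Sm, w j))
    (hBp : Bp = min (∑ j ∈ Sp, z j) (∑ j ∈ Sp, w j))
    (hdec : β * finSup0 Sm (fun j => -v j / y j) * Bm
          - β * finInf0 Sp (fun j => v j / y j) * Bp
          + β * (∑ j, v j) < IAb A b y - IAb A b z) :
    IAb A b z ≤ IAb A b x := by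
  -- positivity of dd
  have hdpos : ∀ (u : Fin N → ℝ), (∀ j, 0 < u j) → ∀ i, 0 < dd A u i := by
    intro u hu i
    obtain ⟨j, hj⟩ := hrow i
    exact Finset.sum_pos' (fun k _ => mul_nonneg (hA i k) (hu k).le)
      ⟨j, Finset.mem_univ j, mul_pos hj (hu j)⟩
  have hdx := hdpos x hx
  have hdy := hdpos y hypos
  have hznn : ∀ j, 0 ≤ z j := by
    intro j; rw [hz]
    exact mul_nonneg (hypos j).le (Finset.sum_nonneg fun i _ =>
      div_nonneg (mul_nonneg (hA i j) (hb i).le) (hdy i).le)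
  have hsumdv : ∑ i, dd A v i = ∑ j, v j := by
    simp only [dd]
    rw [Finset.sum_comm]
    simp only [← Finset.sum_mul, hcol, one_mul]
  have hddx : ∀ i, dd A x i = dd A y i - β * dd A v i := by
    intro i
    simp only [dd, hy, Finset.mul_sum, ← Finset.sum_sub_distrib]
    apply Finset.sum_congr rfl
    intro j _; ring
  have hvff : ∀ j, v j * ff A b y j = (v j / y j) * z j := by
    intro j
    have hne := (hypos j).ne'
    rw [hz]
    simp only [EMop]
    field_simp
  have hswap : ∑ i, b i * dd A v i / dd A y i = ∑ j, v j * ff A b y j := by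
    simp only [dd, ff, Finset.mul_sum, Finset.sum_div]
    rw [Finset.sum_comm]
    apply Finset.sum_congr rfl
    intro j _
    apply Finset.sum_congr rfl
    intro i _
    ring
  have hdiff : IAb A b y - IAb A b x
      = ∑ i, (b i * Real.log (dd A x i / dd A y i) + β * dd A v i) := by
    have hterm : ∀ i : Fin M,
        b i * Real.log (dd A x i / dd A y i) + β * dd A v i
        = (b i * Real.log (b i / dd A y i) - (b i - dd A y i))
          - (b i * Real.log (b i / dd A x i) - (b i - dd A x i)) := by
      intro i
      rw [Real.log_div (hdx i).ne' (hdy i).ne', Real.log_div (hb i).ne' (hdy i).ne',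
          Real.log_div (hb i).ne' (hdx i).ne', hddx i]
      ring
    rw [Finset.sum_congr rfl fun i _ => hterm i, Finset.sum_sub_distrib,
        Finset.sum_sub_distrib, Finset.sum_sub_distrib]
    simp only [IAb, Finset.sum_sub_distrib]
  have hlog : IAb A b y - IAb A b x
      ≤ ∑ i, (-(β * (b i * dd A v i / dd A y i)) + β * dd A v i) := by
    rw [hdiff]
    apply Finset.sum_le_sum
    intro i _
    have h1 : Real.log (dd A x i / dd A y i) ≤ dd A x i / dd A y i - 1 :=
      Real.log_le_sub_one_of_pos (div_pos (hdx i) (hdy i))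
    have h2 : b i * Real.log (dd A x i / dd A y i) ≤ b i * (dd A x i / dd A y i - 1) :=
      mul_le_mul_of_nonneg_left h1 (hb i).le
    have hne := (hdy i).ne'
    have h3 : b i * (dd A x i / dd A y i - 1) = -(β * (b i * dd A v i / dd A y i)) := by
      rw [hddx i, sub_div, div_self hne]
      ring
    linarith
  have hsum2 : ∑ i, (-(β * (b i * dd A v i / dd A y i)) + β * dd A v i)
      = β * (∑ j, v j) - β * ∑ j, (v j / y j) * z j := by
    rw [Finset.sum_add_distrib]
    have e1 : ∑ i, -(β * (b i * dd A v i / dd A y i))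
        = -(β * ∑ i, b i * dd A v i / dd A y i) := by
      rw [Finset.mul_sum, ← Finset.sum_neg_distrib]
    have e2 : ∑ i, β * dd A v i = β * (∑ j, v j) := by
      rw [← Finset.mul_sum, hsumdv]
    rw [e1, e2, hswap]
    have e3 : ∑ j, v j * ff A b y j = ∑ j, (v j / y j) * z j :=
      Finset.sum_congr rfl fun j _ => hvff j
    rw [e3]
    ring
  have hkey : IAb A b y - IAb A b x
      ≤ β * (∑ j, v j) - β * ∑ j, (v j / y j) * z j := by
    rw [← hsum2]; exact hlog
  -- split the sum
  have hsplit : ∑ j, (v j / y j) * z j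
      = ∑ j ∈ Sp, (v j / y j) * z j - ∑ j ∈ Sm, (-v j / y j) * z j := by
    have h0 : ∑ j ∈ Finset.univ.filter (fun j => ¬ 0 < v j), (v j / y j) * z j
        = ∑ j ∈ Sm, (v j / y j) * z j := by
      rw [hSm]
      refine (Finset.sum_subset ?_ ?_).symm
      · intro j hj
        simp only [Finset.mem_filter, Finset.mem_univ, true_and] at hj ⊢
        exact not_lt.mpr hj.le
      · intro j hj hnj
        simp only [Finset.mem_filter, Finset.mem_univ, true_and] at hj hnj
        have hv0 : v j = 0 := le_antisymm (not_lt.mp hj) (not_lt.mp hnj)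
        simp [hv0]
    rw [← Finset.sum_filter_add_sum_filter_not Finset.univ (fun j => 0 < v j)
        (fun j => (v j / y j) * z j), h0, ← hSp]
    have h1 : ∑ j ∈ Sm, (v j / y j) * z j = -∑ j ∈ Sm, (-v j / y j) * z j := by
      rw [← Finset.sum_neg_distrib]
      apply Finset.sum_congr rfl
      intro j _; ring
    rw [h1]; ring
  have hBmb : ∑ j ∈ Sm, (-v j / y j) * z j ≤ finSup0 Sm (fun j => -v j / y j) * Bm := by
    rcases Finset.eq_empty_or_nonempty Sm with h | h
    · simp [h, finSup0]
    · simp only [finSup0, dif_pos h]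
      have hsupnn : 0 ≤ Sm.sup' h (fun j => -v j / y j) := by
        obtain ⟨j, hj⟩ := h
        refine le_trans ?_ (Finset.le_sup' _ hj)
        have hvj : v j < 0 := by
          rw [hSm] at hj
          simpa using hj
        exact div_nonneg (neg_nonneg.mpr hvj.le) (hypos j).le
      calc ∑ j ∈ Sm, (-v j / y j) * z j
          ≤ ∑ j ∈ Sm, Sm.sup' h (fun j => -v j / y j) * z j :=
            Finset.sum_le_sum fun j hj =>
              mul_le_mul_of_nonneg_right (Finset.le_sup' (fun j => -v j / y j) hj) (hznn j)
        _ = Sm.sup' h (fun j => -v j / y j) * ∑ j ∈ Sm, z j := by rw [Finset.mul_sum]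
        _ ≤ Sm.sup' h (fun j => -v j / y j) * Bm := by
            apply mul_le_mul_of_nonneg_left _ hsupnn
            rw [hBm]
            exact le_trans (by linarith) (le_max_left _ _)
  have hBpb : finInf0 Sp (fun j => v j / y j) * Bp ≤ ∑ j ∈ Sp, (v j / y j) * z j := by
    rcases Finset.eq_empty_or_nonempty Sp with h | h
    · simp [h, finInf0]
    · simp only [finInf0, dif_pos h]
      have hinfnn : 0 ≤ Sp.inf' h (fun j => v j / y j) := by
        apply Finset.le_inf'
        intro j hj
        have hvj : 0 < v j := by
          rw [hSp] at hj
          simpa using hj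
        exact div_nonneg hvj.le (hypos j).le
      calc Sp.inf' h (fun j => v j / y j) * Bp
          ≤ Sp.inf' h (fun j => v j / y j) * ∑ j ∈ Sp, z j := by
            apply mul_le_mul_of_nonneg_left _ hinfnn
            rw [hBp]
            exact min_le_left _ _
        _ = ∑ j ∈ Sp, Sp.inf' h (fun j => v j / y j) * z j := by rw [Finset.mul_sum]
        _ ≤ ∑ j ∈ Sp, (v j / y j) * z j :=
            Finset.sum_le_sum fun j hj =>
              mul_le_mul_of_nonneg_right (Finset.inf'_le (fun j => v j / y j) hj) (hznn j)
  have hm1 : β * ∑ j ∈ Sm, (-v j / y j) * z j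
      ≤ β * (finSup0 Sm (fun j => -v j / y j) * Bm) :=
    mul_le_mul_of_nonneg_left hBmb hβ.le
  have hm2 : β * (finInf0 Sp (fun j => v j / y j) * Bp)
      ≤ β * ∑ j ∈ Sp, (v j / y j) * z j :=
    mul_le_mul_of_nonneg_left hBpb hβ.le
  have hfinal : IAb A b y - IAb A b x
      ≤ β * finSup0 Sm (fun j => -v j / y j) * Bm
        - β * finInf0 Sp (fun j => v j / y j) * Bp + β * (∑ j, v j) := by
    rw [hsplit] at hkey
    nlinarith [hkey, hm1, hm2]
  linarith [hdec, hfinal]
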